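/- Let M be a weight module over the Virasoro algebra with weight spaces M_λ, and suppose there exist x ∈ M_{-1}, y ∈ M_1 and τ ∈ k, τ ≠ 0, with e_1 x = 0, e_{-1} y = 0, x = e_{-2} y, e_2 x = τ y. Then the subspace N = U_- x + U_+ y (U_± the subalgebras of U(V) generated by e_{±1}, e_{±2}) is a V-submodule of M all of whose weight spaces are finite-dimensional. -/
import Mathlib


/-- Let `M` be a weight module over the Virasoro algebra (with `c` acting by a
scalar), and suppose `x ∈ M₋₁`, `y ∈ M₁` and `τ ≠ 0` satisfy `e₁ x = 0`,
`e₋₁ y = 0`, `x = e₋₂ y`, `e₂ x = τ y`.  Then the subspace `N = U₋ x + U₊ y`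
(where `U₊`, `U₋` are the subalgebras of `U(V)` generated by `e₁, e₂` and
`e₋₁, e₋₂`) is a `V`-submodule of `M` all of whose weight spaces are
finite-dimensional. -/
theorem virasoro_N_is_submodule_with_finite_weights
    {k : Type*} [Field k] [CharZero k]
    {L : Type*} [LieRing L] [LieAlgebra k L]
    (E : ℤ → L) (C : L)
    (hC : ∀ z : L, ⁅C, z⁆ = 0)
    (hE : ∀ i j : ℤ, ⁅E i, E j⁆ =
      (j - i) • E (i + j) + (if i + j = 0 then ((i : k) ^ 3 - (i : k)) / 12 else 0) • C)
    (hspan : Submodule.span k ({C} ∪ Set.range E) = ⊤)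
    {M : Type*} [AddCommGroup M] [Module k M] [LieRingModule L M] [LieModule k L M]
    (hweight : (⨆ μ : k, Module.End.eigenspace (LieModule.toEnd k L M (E 0)) μ) = ⊤)
    (κ : k) (hc : ∀ m : M, ⁅C, m⁆ = κ • m)
    (x y : M) (τ : k) (hτ : τ ≠ 0)
    (hx : ⁅E 0, x⁆ = (-1 : k) • x) (hy : ⁅E 0, y⁆ = (1 : k) • y)
    (h1x : ⁅E 1, x⁆ = 0) (hm1y : ⁅E (-1), y⁆ = 0)
    (hxy : x = ⁅E (-2), y⁆) (h2x : ⁅E 2, x⁆ = τ • y) :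
    letI ρ : UniversalEnvelopingAlgebra k L →ₐ[k] Module.End k M :=
      UniversalEnvelopingAlgebra.lift k (LieModule.toEnd k L M)
    letI Uminus : Subalgebra k (UniversalEnvelopingAlgebra k L) :=
      Algebra.adjoin k {UniversalEnvelopingAlgebra.ι k (E (-1)),
        UniversalEnvelopingAlgebra.ι k (E (-2))}
    letI Uplus : Subalgebra k (UniversalEnvelopingAlgebra k L) :=
      Algebra.adjoin k {UniversalEnvelopingAlgebra.ι k (E 1),
        UniversalEnvelopingAlgebra.ι k (E 2)}
    letI N : Submodule k M := Submodule.span k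
      ((fun a => ρ a x) '' (Uminus : Set (UniversalEnvelopingAlgebra k L)) ∪
       (fun a => ρ a y) '' (Uplus : Set (UniversalEnvelopingAlgebra k L)))
    (∀ u : L, ∀ m ∈ N, ⁅u, m⁆ ∈ N) ∧
    (∀ μ : k, FiniteDimensional k
      ↥(N ⊓ Module.End.eigenspace (LieModule.toEnd k L M (E 0)) μ)) := by
  classical
  have hρι : ∀ (u : L) (m : M), (UniversalEnvelopingAlgebra.lift k (LieModule.toEnd k L M))
      (UniversalEnvelopingAlgebra.ι k u) m = ⁅u, m⁆ := by
    intro u m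
    rw [UniversalEnvelopingAlgebra.lift_ι_apply]
    rfl
  have hE' : ∀ i j : ℤ, ⁅E i, E j⁆ = ((j : k) - i) • E (i + j) +
      (if i + j = 0 then ((i : k) ^ 3 - (i : k)) / 12 else 0) • C := by
    intro i j
    rw [hE i j, ← Int.cast_smul_eq_zsmul k, Int.cast_sub]
  have hbr : ∀ (i j : ℤ) (m : M), ⁅E i, ⁅E j, m⁆⁆ = ⁅E j, ⁅E i, m⁆⁆ +
      (((j : k) - i) • ⁅E (i + j), m⁆ +
       ((if i + j = 0 then ((i : k) ^ 3 - (i : k)) / 12 else 0) * κ) • m) := by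
    intro i j m
    have h2 : ⁅⁅E i, E j⁆, m⁆ = ((j : k) - i) • ⁅E (i + j), m⁆ +
        ((if i + j = 0 then ((i : k) ^ 3 - (i : k)) / 12 else 0) * κ) • m := by
      rw [hE' i j, add_lie, smul_lie, smul_lie, hc, smul_smul]
    have h1 : ⁅E i, ⁅E j, m⁆⁆ = ⁅⁅E i, E j⁆, m⁆ + ⁅E j, ⁅E i, m⁆⁆ := by
      rw [lie_lie]; abel
    rw [h1, h2]; abel
  have key : ∀ (j : ℤ) (lam : k) (v : M), ⁅E 0, v⁆ = lam • v →
      ⁅E 0, ⁅E j, v⁆⁆ = (lam + j) • ⁅E j, v⁆ := by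
    intro j lam v hv
    have hb := hbr 0 j v
    rw [hv, lie_smul] at hb
    simp only [Int.cast_zero, zero_add, sub_zero] at hb
    rw [hb]
    have h0 : (if j = 0 then ((0:k) ^ 3) / 12 else 0) * κ = 0 := by split <;> norm_num
    rw [h0, zero_smul, add_zero, add_smul]
  let vx : List Bool → M := fun l => l.foldr (fun b v => ⁅E (if b then (-2:ℤ) else -1), v⁆) x
  let vy : List Bool → M := fun l => l.foldr (fun b v => ⁅E (if b then (2:ℤ) else 1), v⁆) y
  let wd : List Bool → ℕ := fun l => (l.map (fun b => if b then 2 else 1)).sum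
  have hvxc : ∀ (b : Bool) (l : List Bool),
      vx (b :: l) = ⁅E (if b then (-2:ℤ) else -1), vx l⁆ := fun b l => rfl
  have hvyc : ∀ (b : Bool) (l : List Bool),
      vy (b :: l) = ⁅E (if b then (2:ℤ) else 1), vy l⁆ := fun b l => rfl
  have hwdc : ∀ (b : Bool) (l : List Bool), wd (b :: l) = (if b then 2 else 1) + wd l :=
    fun b l => rfl
  have hvxnil : vx [] = x := rfl
  have hvynil : vy [] = y := rfl
  have hvx0 : ∀ l : List Bool, ⁅E 0, vx l⁆ = (-1 - (wd l : k)) • vx l := by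
    intro l
    induction l with
    | nil => simpa [hvxnil, show wd ([]:List Bool) = 0 from rfl] using hx
    | cons b l ih =>
      rw [hvxc, key _ _ _ ih, hwdc]
      congr 1
      cases b <;> (push_cast; norm_num; try ring)
  have hvy0 : ∀ l : List Bool, ⁅E 0, vy l⁆ = (1 + (wd l : k)) • vy l := by
    intro l
    induction l with
    | nil => simpa [hvynil, show wd ([]:List Bool) = 0 from rfl] using hy
    | cons b l ih =>
      rw [hvyc, key _ _ _ ih, hwdc]
      congr 1
      cases b <;> (push_cast; norm_num; try ring)
  let Nm : Submodule k M := Submodule.span k (Set.range vx)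
  let Np : Submodule k M := Submodule.span k (Set.range vy)
  have hvxm : ∀ l, vx l ∈ Nm := fun l => Submodule.subset_span ⟨l, rfl⟩
  have hvym : ∀ l, vy l ∈ Np := fun l => Submodule.subset_span ⟨l, rfl⟩
  have hxNm : x ∈ Nm := hvxm []
  have hyNp : y ∈ Np := hvym []
  have spanlift : ∀ (j : ℤ) (S : Set M) (Q : Submodule k M),
      (∀ v ∈ S, ⁅E j, v⁆ ∈ Q) → ∀ v ∈ Submodule.span k S, ⁅E j, v⁆ ∈ Q := by
    intro j S Q h v hv
    induction hv using Submodule.span_induction with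
    | mem w hw => exact h w hw
    | zero => rw [lie_zero]; exact Q.zero_mem
    | add a b _ _ ha hb => rw [lie_add]; exact Q.add_mem ha hb
    | smul c a _ ha => rw [lie_smul]; exact Q.smul_mem c ha
  have stepNm : ∀ (b : Bool) (v : M), v ∈ Nm → ⁅E (if b then (-2:ℤ) else -1), v⁆ ∈ Nm := by
    intro b
    refine spanlift _ _ _ ?_
    rintro v ⟨l, rfl⟩
    exact hvxm (b :: l)
  have stepNp : ∀ (b : Bool) (v : M), v ∈ Np → ⁅E (if b then (2:ℤ) else 1), v⁆ ∈ Np := by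
    intro b
    refine spanlift _ _ _ ?_
    rintro v ⟨l, rfl⟩
    exact hvym (b :: l)
  have hE0Nm : ∀ v ∈ Nm, ⁅E 0, v⁆ ∈ Nm := by
    refine spanlift _ _ _ ?_
    rintro v ⟨l, rfl⟩
    rw [hvx0]
    exact Nm.smul_mem _ (hvxm l)
  have hE0Np : ∀ v ∈ Np, ⁅E 0, v⁆ ∈ Np := by
    refine spanlift _ _ _ ?_
    rintro v ⟨l, rfl⟩
    rw [hvy0]
    exact Np.smul_mem _ (hvym l)
  have stepNm1 : ∀ v ∈ Nm, ⁅E (-1 : ℤ), v⁆ ∈ Nm := fun v hv => stepNm false v hv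
  have stepNm2 : ∀ v ∈ Nm, ⁅E (-2 : ℤ), v⁆ ∈ Nm := fun v hv => stepNm true v hv
  have stepNp1 : ∀ v ∈ Np, ⁅E (1 : ℤ), v⁆ ∈ Np := fun v hv => stepNp false v hv
  have stepNp2 : ∀ v ∈ Np, ⁅E (2 : ℤ), v⁆ ∈ Np := fun v hv => stepNp true v hv
  have stepMixm : ∀ (j : ℤ), (∀ v ∈ Nm, ⁅E j, v⁆ ∈ Nm) → ⁅E j, y⁆ ∈ Nm →
      ∀ v ∈ Nm ⊔ Submodule.span k {y}, ⁅E j, v⁆ ∈ Nm := by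
    intro j hN hy' v hv
    rcases Submodule.mem_sup.1 hv with ⟨a, ha, b, hb, rfl⟩
    rcases Submodule.mem_span_singleton.1 hb with ⟨t, rfl⟩
    rw [lie_add, lie_smul]
    exact Nm.add_mem (hN a ha) (Nm.smul_mem t hy')
  have stepMixp : ∀ (j : ℤ), (∀ v ∈ Np, ⁅E j, v⁆ ∈ Np) → ⁅E j, x⁆ ∈ Np →
      ∀ v ∈ Np ⊔ Submodule.span k {x}, ⁅E j, v⁆ ∈ Np := by
    intro j hN hx' v hv
    rcases Submodule.mem_sup.1 hv with ⟨a, ha, b, hb, rfl⟩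
    rcases Submodule.mem_span_singleton.1 hb with ⟨t, rfl⟩
    rw [lie_add, lie_smul]
    exact Np.add_mem (hN a ha) (Np.smul_mem t hx')
  have stepMix1 : ∀ v ∈ Nm ⊔ Submodule.span k {y}, ⁅E (-1 : ℤ), v⁆ ∈ Nm :=
    stepMixm (-1) stepNm1 (by rw [hm1y]; exact Nm.zero_mem)
  have stepMix2 : ∀ v ∈ Nm ⊔ Submodule.span k {y}, ⁅E (-2 : ℤ), v⁆ ∈ Nm :=
    stepMixm (-2) stepNm2 (by rw [← hxy]; exact hxNm)
  have stepMixp1 : ∀ v ∈ Np ⊔ Submodule.span k {x}, ⁅E (1 : ℤ), v⁆ ∈ Np :=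
    stepMixp 1 stepNp1 (by rw [h1x]; exact Np.zero_mem)
  have stepMixp2 : ∀ v ∈ Np ⊔ Submodule.span k {x}, ⁅E (2 : ℤ), v⁆ ∈ Np :=
    stepMixp 2 stepNp2 (by rw [h2x]; exact Np.smul_mem τ hyNp)
  have hE1x : ∀ l, ⁅E (1 : ℤ), vx l⁆ ∈ Nm := by
    intro l
    induction l with
    | nil => rw [hvxnil, h1x]; exact Nm.zero_mem
    | cons b l ih =>
      have hvl := hvxm l
      cases b
      · rw [hvxc]; norm_num
        have hb := hbr 1 (-1) (vx l); norm_num at hb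
        rw [hb]
        exact add_mem (stepNm1 _ ih) (neg_mem (Submodule.smul_mem _ _ (hE0Nm _ hvl)))
      · rw [hvxc]; norm_num
        have hb := hbr 1 (-2) (vx l); norm_num at hb
        rw [hb]
        exact add_mem (stepNm2 _ ih) (neg_mem (Submodule.smul_mem _ _ (stepNm1 _ hvl)))
  have hE2x : ∀ l, ⁅E (2 : ℤ), vx l⁆ ∈ Nm ⊔ Submodule.span k {y} := by
    intro l
    induction l with
    | nil =>
      rw [hvxnil, h2x]
      exact Submodule.mem_sup_right
        (Submodule.smul_mem _ τ (Submodule.mem_span_singleton_self y))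
    | cons b l ih =>
      have hvl := hvxm l
      cases b
      · rw [hvxc]; norm_num
        have hb := hbr 2 (-1) (vx l); norm_num at hb
        rw [hb]
        exact Submodule.mem_sup_left
          (add_mem (stepMix1 _ ih) (neg_mem (Submodule.smul_mem _ _ (hE1x l))))
      · rw [hvxc]; norm_num
        have hb := hbr 2 (-2) (vx l); norm_num at hb
        rw [hb]
        exact Submodule.mem_sup_left
          (add_mem (stepMix2 _ ih) (add_mem (neg_mem (Submodule.smul_mem _ _ (hE0Nm _ hvl)))
            (Submodule.smul_mem _ _ hvl)))
  have hEm1y : ∀ l, ⁅E (-1 : ℤ), vy l⁆ ∈ Np := by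
    intro l
    induction l with
    | nil => rw [hvynil, hm1y]; exact Np.zero_mem
    | cons b l ih =>
      have hvl := hvym l
      cases b
      · rw [hvyc]; norm_num
        have hb := hbr (-1) 1 (vy l); norm_num at hb
        rw [hb]
        exact add_mem (stepNp1 _ ih) (Submodule.smul_mem _ _ (hE0Np _ hvl))
      · rw [hvyc]; norm_num
        have hb := hbr (-1) 2 (vy l); norm_num at hb
        rw [hb]
        exact add_mem (stepNp2 _ ih) (Submodule.smul_mem _ _ (stepNp1 _ hvl))
  have hEm2y : ∀ l, ⁅E (-2 : ℤ), vy l⁆ ∈ Np ⊔ Submodule.span k {x} := by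
    intro l
    induction l with
    | nil =>
      rw [hvynil, ← hxy]
      exact Submodule.mem_sup_right (Submodule.mem_span_singleton_self x)
    | cons b l ih =>
      have hvl := hvym l
      cases b
      · rw [hvyc]; norm_num
        have hb := hbr (-2) 1 (vy l); norm_num at hb
        rw [hb]
        exact Submodule.mem_sup_left
          (add_mem (stepMixp1 _ ih) (Submodule.smul_mem _ _ (hEm1y l)))
      · rw [hvyc]; norm_num
        have hb := hbr (-2) 2 (vy l); norm_num at hb
        rw [hb]
        exact Submodule.mem_sup_left
          (add_mem (stepMixp2 _ ih) (add_mem (Submodule.smul_mem _ _ (hE0Np _ hvl))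
            (neg_mem (Submodule.smul_mem _ _ hvl))))
  have hySpanle : Submodule.span k {y} ≤ Np := by
    rw [Submodule.span_singleton_le_iff_mem]; exact hyNp
  have hxSpanle : Submodule.span k {x} ≤ Nm := by
    rw [Submodule.span_singleton_le_iff_mem]; exact hxNm
  have supstep : ∀ (j : ℤ), (∀ v ∈ Nm, ⁅E j, v⁆ ∈ Nm ⊔ Np) →
      (∀ v ∈ Np, ⁅E j, v⁆ ∈ Nm ⊔ Np) → ∀ v ∈ Nm ⊔ Np, ⁅E j, v⁆ ∈ Nm ⊔ Np := by
    intro j h1 h2 v hv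
    rcases Submodule.mem_sup.1 hv with ⟨a, ha, b, hb, rfl⟩
    rw [lie_add]; exact add_mem (h1 a ha) (h2 b hb)
  let Stab : Submodule k L :=
    { carrier := {u : L | ∀ m ∈ Nm ⊔ Np, ⁅u, m⁆ ∈ Nm ⊔ Np}
      add_mem' := fun hu hv m hm => by rw [add_lie]; exact add_mem (hu m hm) (hv m hm)
      zero_mem' := fun m hm => by rw [zero_lie]; exact zero_mem _
      smul_mem' := fun c u hu m hm => by rw [smul_lie]; exact Submodule.smul_mem _ c (hu m hm) }
  have hStabLie : ∀ u ∈ Stab, ∀ w ∈ Stab, ⁅u, w⁆ ∈ Stab := by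
    intro u hu w hw m hm
    rw [lie_lie]
    exact sub_mem (hu _ (hw m hm)) (hw _ (hu m hm))
  have hE1S : E (1:ℤ) ∈ Stab := by
    refine supstep 1 ?_ ?_
    · exact spanlift 1 _ _ (by rintro v ⟨l, rfl⟩; exact Submodule.mem_sup_left (hE1x l))
    · intro v hv; exact Submodule.mem_sup_right (stepNp1 v hv)
  have hE2S : E (2:ℤ) ∈ Stab := by
    refine supstep 2 ?_ ?_
    · refine spanlift 2 _ _ ?_
      rintro v ⟨l, rfl⟩
      rcases Submodule.mem_sup.1 (hE2x l) with ⟨a, ha, b, hb, heq⟩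
      exact heq ▸ add_mem (Submodule.mem_sup_left ha) (Submodule.mem_sup_right (hySpanle hb))
    · intro v hv; exact Submodule.mem_sup_right (stepNp2 v hv)
  have hEm1S : E (-1:ℤ) ∈ Stab := by
    refine supstep (-1) ?_ ?_
    · intro v hv; exact Submodule.mem_sup_left (stepNm1 v hv)
    · exact spanlift (-1) _ _ (by rintro v ⟨l, rfl⟩; exact Submodule.mem_sup_right (hEm1y l))
  have hEm2S : E (-2:ℤ) ∈ Stab := by
    refine supstep (-2) ?_ ?_
    · intro v hv; exact Submodule.mem_sup_left (stepNm2 v hv)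
    · refine spanlift (-2) _ _ ?_
      rintro v ⟨l, rfl⟩
      rcases Submodule.mem_sup.1 (hEm2y l) with ⟨a, ha, b, hb, heq⟩
      exact heq ▸ add_mem (Submodule.mem_sup_right ha) (Submodule.mem_sup_left (hxSpanle hb))
  have hE0S : E (0:ℤ) ∈ Stab := by
    refine supstep 0 ?_ ?_
    · intro v hv; exact Submodule.mem_sup_left (hE0Nm v hv)
    · intro v hv; exact Submodule.mem_sup_right (hE0Np v hv)
  have hCS : C ∈ Stab := by
    intro m hm
    rw [hc]
    exact Submodule.smul_mem _ _ hm
  have hEnat : ∀ n : ℕ, E (n : ℤ) ∈ Stab ∧ E (-(n : ℤ)) ∈ Stab := by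
    intro n
    induction n using Nat.strong_induction_on with
    | _ n ih =>
      match n with
      | 0 => constructor <;> simpa using hE0S
      | 1 => exact ⟨hE1S, hEm1S⟩
      | 2 => exact ⟨hE2S, hEm2S⟩
      | (m+3) =>
        obtain ⟨hp, hq⟩ := ih (m+2) (by omega)
        have hmp2 : ((m+2 : ℕ) : ℤ) = (m : ℤ) + 2 := by push_cast; ring
        rw [hmp2] at hp hq
        have hne : ((((m:ℤ)+2 : ℤ) : k) - ((1:ℤ) : k)) ≠ 0 := by
          have h1 := Nat.cast_add_one_ne_zero (R := k) m
          intro h; apply h1; push_cast at h ⊢; linear_combination h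
        constructor
        · have hbE := hE' 1 ((m:ℤ)+2)
          rw [if_neg (by omega), zero_smul, add_zero,
            show (1:ℤ) + ((m:ℤ)+2) = (m:ℤ)+3 by ring] at hbE
          have heq : E ((m:ℤ)+3) = ((((m:ℤ)+2 : ℤ) : k) - ((1:ℤ) : k))⁻¹ • ⁅E 1, E ((m:ℤ)+2)⁆ := by
            rw [hbE, smul_smul, inv_mul_cancel₀ hne, one_smul]
          rw [show ((m+3 : ℕ) : ℤ) = (m:ℤ)+3 by push_cast; ring, heq]
          exact Stab.smul_mem _ (hStabLie _ hE1S _ hp)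
        · have hne' : ((-((m:ℤ)+2) : ℤ) : k) - ((-1 : ℤ) : k) ≠ 0 := by
            have h1 := Nat.cast_add_one_ne_zero (R := k) m
            intro h; apply h1; push_cast at h ⊢; linear_combination -h
          have hbE := hE' (-1) (-((m:ℤ)+2))
          rw [if_neg (by omega), zero_smul, add_zero,
            show (-1:ℤ) + -((m:ℤ)+2) = -((m:ℤ)+3) by ring] at hbE
          have heq : E (-((m:ℤ)+3)) =
              (((-((m:ℤ)+2) : ℤ) : k) - ((-1 : ℤ) : k))⁻¹ • ⁅E (-1), E (-((m:ℤ)+2))⁆ := by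
            rw [hbE, smul_smul, inv_mul_cancel₀ hne', one_smul]
          rw [show (-((m+3 : ℕ) : ℤ)) = -((m:ℤ)+3) by push_cast; ring, heq]
          exact Stab.smul_mem _ (hStabLie _ hEm1S _ hq)
  have hTop : ∀ u : L, u ∈ Stab := by
    intro u
    have hu : u ∈ Submodule.span k ({C} ∪ Set.range E) := by rw [hspan]; trivial
    refine Submodule.span_le.2 ?_ hu
    rintro w (hw | ⟨n, rfl⟩)
    · rw [Set.mem_singleton_iff] at hw; subst hw; exact hCS
    · obtain ⟨m, rfl | rfl⟩ := Int.eq_nat_or_neg n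
      · exact (hEnat m).1
      · exact (hEnat m).2
  have hUm : ∀ a ∈ Algebra.adjoin k {UniversalEnvelopingAlgebra.ι k (E (-1)),
      UniversalEnvelopingAlgebra.ι k (E (-2))}, ∀ v ∈ Nm,
      (UniversalEnvelopingAlgebra.lift k (LieModule.toEnd k L M)) a v ∈ Nm := by
    intro a ha
    induction ha using Algebra.adjoin_induction with
    | mem g hg =>
      simp only [Set.mem_insert_iff, Set.mem_singleton_iff] at hg
      rcases hg with rfl | rfl
      · intro v hv; rw [hρι]; exact stepNm1 v hv
      · intro v hv; rw [hρι]; exact stepNm2 v hv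
    | algebraMap r =>
      intro v hv
      rw [AlgHom.commutes, Module.algebraMap_end_apply]
      exact Nm.smul_mem r hv
    | add a b ha hb iha ihb =>
      intro v hv; rw [map_add, LinearMap.add_apply]; exact add_mem (iha v hv) (ihb v hv)
    | mul a b ha hb iha ihb =>
      intro v hv; rw [map_mul, Module.End.mul_apply]; exact iha _ (ihb v hv)
  have hUp : ∀ a ∈ Algebra.adjoin k {UniversalEnvelopingAlgebra.ι k (E 1),
      UniversalEnvelopingAlgebra.ι k (E 2)}, ∀ v ∈ Np,
      (UniversalEnvelopingAlgebra.lift k (LieModule.toEnd k L M)) a v ∈ Np := by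
    intro a ha
    induction ha using Algebra.adjoin_induction with
    | mem g hg =>
      simp only [Set.mem_insert_iff, Set.mem_singleton_iff] at hg
      rcases hg with rfl | rfl
      · intro v hv; rw [hρι]; exact stepNp1 v hv
      · intro v hv; rw [hρι]; exact stepNp2 v hv
    | algebraMap r =>
      intro v hv
      rw [AlgHom.commutes, Module.algebraMap_end_apply]
      exact Np.smul_mem r hv
    | add a b ha hb iha ihb =>
      intro v hv; rw [map_add, LinearMap.add_apply]; exact add_mem (iha v hv) (ihb v hv)
    | mul a b ha hb iha ihb =>
      intro v hv; rw [map_mul, Module.End.mul_apply]; exact iha _ (ihb v hv)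
  have hexm : ∀ l : List Bool, ∃ a ∈ Algebra.adjoin k {UniversalEnvelopingAlgebra.ι k (E (-1)),
      UniversalEnvelopingAlgebra.ι k (E (-2))},
      (UniversalEnvelopingAlgebra.lift k (LieModule.toEnd k L M)) a x = vx l := by
    intro l
    induction l with
    | nil => exact ⟨1, one_mem _, by rw [map_one]; rfl⟩
    | cons b l ih =>
      obtain ⟨a, ha, hax⟩ := ih
      refine ⟨UniversalEnvelopingAlgebra.ι k (E (if b then (-2:ℤ) else -1)) * a,
        mul_mem (Algebra.subset_adjoin ?_) ha, ?_⟩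
      · cases b <;> simp
      · rw [map_mul, Module.End.mul_apply, hax, hρι, hvxc]
  have hexp : ∀ l : List Bool, ∃ a ∈ Algebra.adjoin k {UniversalEnvelopingAlgebra.ι k (E 1),
      UniversalEnvelopingAlgebra.ι k (E 2)},
      (UniversalEnvelopingAlgebra.lift k (LieModule.toEnd k L M)) a y = vy l := by
    intro l
    induction l with
    | nil => exact ⟨1, one_mem _, by rw [map_one]; rfl⟩
    | cons b l ih =>
      obtain ⟨a, ha, hax⟩ := ih
      refine ⟨UniversalEnvelopingAlgebra.ι k (E (if b then (2:ℤ) else 1)) * a,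
        mul_mem (Algebra.subset_adjoin ?_) ha, ?_⟩
      · cases b <;> simp
      · rw [map_mul, Module.End.mul_apply, hax, hρι, hvyc]
  have hNmEq : Submodule.span k
      ((fun a => (UniversalEnvelopingAlgebra.lift k (LieModule.toEnd k L M)) a x) ''
        (Algebra.adjoin k {UniversalEnvelopingAlgebra.ι k (E (-1)),
          UniversalEnvelopingAlgebra.ι k (E (-2))} : Set (UniversalEnvelopingAlgebra k L))) = Nm := by
    apply le_antisymm
    · refine Submodule.span_le.2 ?_
      rintro _ ⟨a, ha, rfl⟩
      exact hUm a ha x hxNm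
    · refine Submodule.span_le.2 ?_
      rintro _ ⟨l, rfl⟩
      obtain ⟨a, ha, hax⟩ := hexm l
      exact hax ▸ Submodule.subset_span ⟨a, ha, rfl⟩
  have hNpEq : Submodule.span k
      ((fun a => (UniversalEnvelopingAlgebra.lift k (LieModule.toEnd k L M)) a y) ''
        (Algebra.adjoin k {UniversalEnvelopingAlgebra.ι k (E 1),
          UniversalEnvelopingAlgebra.ι k (E 2)} : Set (UniversalEnvelopingAlgebra k L))) = Np := by
    apply le_antisymm
    · refine Submodule.span_le.2 ?_
      rintro _ ⟨a, ha, rfl⟩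
      exact hUp a ha y hyNp
    · refine Submodule.span_le.2 ?_
      rintro _ ⟨l, rfl⟩
      obtain ⟨a, ha, hax⟩ := hexp l
      exact hax ▸ Submodule.subset_span ⟨a, ha, rfl⟩
  refine ⟨?_, ?_⟩
  · rw [Submodule.span_union, hNmEq, hNpEq]
    exact fun u => hTop u
  · intro μ
    rw [Submodule.span_union, hNmEq, hNpEq]
    set f := LieModule.toEnd k L M (E 0) with hf
    have hlen : ∀ l : List Bool, l.length ≤ wd l := by
      intro l
      induction l with
      | nil => simp [show wd ([]:List Bool) = 0 from rfl]
      | cons b l ih =>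
        rw [List.length_cons, hwdc]
        cases b <;> (norm_num; omega)
    have hfin1 : ∀ d : ℕ, {l : List Bool | wd l = d}.Finite := by
      intro d
      refine Set.Finite.subset (List.finite_length_le (α := Bool) d) ?_
      intro l hl
      simp only [Set.mem_setOf_eq] at hl ⊢
      rw [← hl]
      exact hlen l
    have hfinx : ∀ ν : k, {l : List Bool | (-1 - (wd l : k)) = ν}.Finite := by
      intro ν
      rcases Set.eq_empty_or_nonempty {l : List Bool | (-1 - (wd l : k)) = ν} with h | ⟨l₀, hl₀⟩
      · rw [h]; exact Set.finite_empty
      · refine (hfin1 (wd l₀)).subset ?_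
        intro l hl
        simp only [Set.mem_setOf_eq] at hl hl₀ ⊢
        have hcast : ((wd l : k)) = (wd l₀ : k) := by linear_combination hl₀ - hl
        exact_mod_cast hcast
    have hfiny : ∀ ν : k, {l : List Bool | (1 + (wd l : k)) = ν}.Finite := by
      intro ν
      rcases Set.eq_empty_or_nonempty {l : List Bool | (1 + (wd l : k)) = ν} with h | ⟨l₀, hl₀⟩
      · rw [h]; exact Set.finite_empty
      · refine (hfin1 (wd l₀)).subset ?_
        intro l hl
        simp only [Set.mem_setOf_eq] at hl hl₀ ⊢
        have hcast : ((wd l : k)) = (wd l₀ : k) := by linear_combination hl - hl₀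
        exact_mod_cast hcast
    set G : k → Set M := fun ν => {v | (v ∈ Set.range vx ∪ Set.range vy) ∧ ⁅E 0, v⁆ = ν • v}
      with hG
    have hGfin : ∀ ν, (G ν).Finite := by
      intro ν
      have hsub : G ν ⊆ ({0} ∪ (vx '' {l | (-1 - (wd l : k)) = ν})) ∪
          (vy '' {l | (1 + (wd l : k)) = ν}) := by
        rintro v ⟨hmem, hev⟩
        rcases hmem with ⟨l, rfl⟩ | ⟨l, rfl⟩
        · by_cases hz : vx l = 0
          · exact Or.inl (Or.inl hz)
          · refine Or.inl (Or.inr ⟨l, ?_, rfl⟩)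
            have h2 : (-1 - (wd l : k)) • vx l = ν • vx l := by rw [← hvx0 l, hev]
            exact smul_left_injective k hz h2
        · by_cases hz : vy l = 0
          · exact Or.inl (Or.inl hz)
          · refine Or.inr ⟨l, ?_, rfl⟩
            have h2 : (1 + (wd l : k)) • vy l = ν • vy l := by rw [← hvy0 l, hev]
            exact smul_left_injective k hz h2
      exact Set.Finite.subset
        (((Set.finite_singleton 0).union ((hfinx ν).image vx)).union ((hfiny ν).image vy)) hsub
    set W : k → Submodule k M := fun ν => Submodule.span k (G ν) with hW
    have hWfin : ∀ ν, FiniteDimensional k (W ν) := fun ν =>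
      FiniteDimensional.span_of_finite k (hGfin ν)
    have hWle : ∀ ν, W ν ≤ Module.End.eigenspace f ν := by
      intro ν
      refine Submodule.span_le.2 ?_
      rintro v ⟨_, hev⟩
      rw [SetLike.mem_coe, Module.End.mem_eigenspace_iff, hf, LieModule.toEnd_apply_apply]
      exact hev
    have hNNle : Nm ⊔ Np ≤ ⨆ ν, W ν := by
      refine sup_le (Submodule.span_le.2 ?_) (Submodule.span_le.2 ?_)
      · rintro _ ⟨l, rfl⟩
        exact SetLike.mem_coe.2 (Submodule.mem_iSup_of_mem (-1 - (wd l : k))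
          (Submodule.subset_span ⟨Or.inl ⟨l, rfl⟩, hvx0 l⟩))
      · rintro _ ⟨l, rfl⟩
        exact SetLike.mem_coe.2 (Submodule.mem_iSup_of_mem (1 + (wd l : k))
          (Submodule.subset_span ⟨Or.inr ⟨l, rfl⟩, hvy0 l⟩))
    have hmain : (Nm ⊔ Np) ⊓ Module.End.eigenspace f μ ≤ W μ := by
      rintro m ⟨hm, hmeig⟩
      have h1 : m ∈ ⨆ ν, W ν := hNNle hm
      have h2 : (⨆ ν, W ν) ≤ W μ ⊔ (⨆ ν ∈ {ν : k | ν ≠ μ}, Module.End.eigenspace f ν) := by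
        refine iSup_le fun ν => ?_
        by_cases h : ν = μ
        · subst h; exact le_sup_left
        · exact le_trans (hWle ν) (le_trans (le_biSup _ h) le_sup_right)
      rcases Submodule.mem_sup.1 (h2 h1) with ⟨a, ha, b, hb, hab⟩
      have hbeig : b ∈ Module.End.eigenspace f μ := by
        have ham : a ∈ Module.End.eigenspace f μ := hWle μ ha
        have hba : b = m - a := by rw [← hab]; abel
        rw [hba]; exact sub_mem hmeig ham
      have hdisj : Disjoint (Module.End.eigenspace f μ)
          (⨆ ν ∈ {ν : k | ν ≠ μ}, Module.End.eigenspace f ν) :=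
        (Module.End.eigenspaces_iSupIndep f).disjoint_biSup (by simp)
      have hb0 : b = 0 := (Submodule.disjoint_def.1 hdisj) b hbeig hb
      rw [← hab, hb0, add_zero]
      exact ha
    haveI := hWfin μ
    exact Submodule.finiteDimensional_of_le hmain
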